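/- The map κ is an antipode for φ: for every u ∈ U, m((id ⊗ κ)(φ(u))) = ε(u)·1 = m((κ ⊗ id)(φ(u))), where m : U ⊗_k U → U is the multiplication map of U. -/

import Mathlib

open scoped TensorProduct

/-- The Cartan matrix of type `A_n`. -/
def cartanA (n : ℕ) (i j : Fin n) : ℤ :=
  if i = j then 2
  else if (i : ℕ) + 1 = (j : ℕ) ∨ (j : ℕ) + 1 = (i : ℕ) then -1
  else 0

/-- For `α, γ ∈ ℕⁿ`, `c(α,γ) = ∑_{i,j} a_{ij} α_i γ_j` with `A` the Cartan matrix
of type `A_n`. -/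
def cpair {n : ℕ} (α γ : Fin n → ℕ) : ℤ :=
  ∑ i : Fin n, ∑ j : Fin n, cartanA n i j * (α i : ℤ) * (γ j : ℤ)

/-- The quantum Serre relations of type `A_n` hold for the family `y`. -/
def serreCond (k : Type) [CommRing k] (q : kˣ) {n : ℕ} {B : Type} [Ring B] [Algebra k B]
    (y : Fin n → B) : Prop :=
  (∀ i j : Fin n, 1 < |((i : ℕ) : ℤ) - ((j : ℕ) : ℤ)| → y i * y j = y j * y i) ∧
  (∀ i j : Fin n, |((i : ℕ) : ℤ) - ((j : ℕ) : ℤ)| = 1 →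
    y i ^ 2 * y j - ((q : k) + ((q⁻¹ : kˣ) : k)) • (y i * y j * y i) + y j * y i ^ 2 = 0)

/-- `U`, with distinguished generators `x`, is a presentation of `U_q^+(sl_{n+1})`:
the quotient of the free associative unital `k`-algebra on `x_1, …, x_n` by the
two-sided ideal generated by the quantum Serre relations.  This is expressed by:
the relations hold in `U`, the `x i` generate `U`, and `U` has the corresponding
universal (lifting) property. -/
def IsUqPlus (k : Type) [CommRing k] (q : kˣ) {n : ℕ} (U : Type) [Ring U] [Algebra k U]
    (x : Fin n → U) : Prop :=
  serreCond k q x ∧ Algebra.adjoin k (Set.range x) = ⊤ ∧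
    ∀ (B : Type) [Ring B] [Algebra k B] (y : Fin n → B),
      serreCond k q y → ∃ f : U →ₐ[k] B, ∀ i, f (x i) = y i

/-- `κ` is an antipode for `φ`: for every `u ∈ U`,
`m((id ⊗ κ)(φ(u))) = ε(u)·1 = m((κ ⊗ id)(φ(u)))`, where `m` is the multiplication of `U`.
Here `φ : U → U ⊗_σ U` is the algebra homomorphism with `φ(x_i) = x_i ⊗ 1 + 1 ⊗ x_i`
(`U ⊗_σ U` having multiplication `μ`), `ε` is the algebra homomorphism with `ε(x_i) = 0`,
and `κ : U → U` is `k`-linear with `κ(1) = 1`, `κ(x_i) = −x_i` and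
`κ(a b) = q^{c(deg a, deg b)} κ(b) κ(a)` for homogeneous `a, b`. -/
theorem stmt4 (k U : Type) [CommRing k] (q : kˣ) (n : ℕ) (hn : 1 ≤ n)
    [Ring U] [Algebra k U] (x : Fin n → U) (hU : IsUqPlus k q U x)
    (𝒜 : (Fin n → ℕ) → Submodule k U) [GradedAlgebra 𝒜]
    (hx𝒜 : ∀ i : Fin n, x i ∈ 𝒜 (Pi.single i 1))
    (μ : U ⊗[k] U →ₗ[k] U ⊗[k] U →ₗ[k] U ⊗[k] U)
    (hμ : ∀ (α γ : Fin n → ℕ) (b c : U), b ∈ 𝒜 α → c ∈ 𝒜 γ → ∀ a d : U,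
      μ (a ⊗ₜ[k] b) (c ⊗ₜ[k] d) = ((q ^ cpair α γ : kˣ) : k) • ((a * c) ⊗ₜ[k] (b * d)))
    (φ : U →ₗ[k] U ⊗[k] U)
    (hφ1 : φ 1 = (1 : U) ⊗ₜ[k] (1 : U))
    (hφm : ∀ a b : U, φ (a * b) = μ (φ a) (φ b))
    (hφx : ∀ i : Fin n, φ (x i) = x i ⊗ₜ[k] (1 : U) + (1 : U) ⊗ₜ[k] x i)
    (ε : U →ₐ[k] k) (hε : ∀ i : Fin n, ε (x i) = 0)
    (κ : U →ₗ[k] U)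
    (hκ1 : κ 1 = 1)
    (hκx : ∀ i : Fin n, κ (x i) = -x i)
    (hκm : ∀ (α β : Fin n → ℕ) (a b : U), a ∈ 𝒜 α → b ∈ 𝒜 β →
      κ (a * b) = ((q ^ cpair α β : kˣ) : k) • (κ b * κ a)) :
    ∀ u : U,
      LinearMap.mul' k U (TensorProduct.map LinearMap.id κ (φ u)) = algebraMap k U (ε u) ∧
      LinearMap.mul' k U (TensorProduct.map κ LinearMap.id (φ u)) = algebraMap k U (ε u) := by
  obtain ⟨hserre, hgen, -⟩ := hU
  have h1mem : (1 : U) ∈ 𝒜 0 := SetLike.one_mem_graded 𝒜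
  have htop : (⨆ β, 𝒜 β : Submodule k U) = ⊤ :=
    (DirectSum.Decomposition.isInternal 𝒜).submodule_iSup_eq_top
  have hc0r : ∀ β : Fin n → ℕ, cpair β (0 : Fin n → ℕ) = 0 := by
    intro β; simp [cpair]
  have hc0l : ∀ β : Fin n → ℕ, cpair (0 : Fin n → ℕ) β = 0 := by
    intro β; simp [cpair]
  -- key computation, right multiplication side
  have keyR : ∀ (i : Fin n) (t : U ⊗[k] U),
      LinearMap.mul' k U (TensorProduct.map LinearMap.id κ
        (μ t (x i ⊗ₜ[k] (1 : U) + (1 : U) ⊗ₜ[k] x i))) = 0 := by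
    intro i
    set s : U ⊗[k] U := x i ⊗ₜ[k] (1 : U) + (1 : U) ⊗ₜ[k] x i with hs
    set F : U ⊗[k] U →ₗ[k] U :=
      LinearMap.mul' k U ∘ₗ TensorProduct.map LinearMap.id κ ∘ₗ μ.flip s with hF
    have hFapp : ∀ t, F t = LinearMap.mul' k U (TensorProduct.map LinearMap.id κ (μ t s)) :=
      fun t => rfl
    suffices h : F = 0 by
      intro t
      have := congrFun (congrArg (fun f : U ⊗[k] U →ₗ[k] U => (f : U ⊗[k] U → U)) h) t
      simpa [hFapp] using this
    apply TensorProduct.ext'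
    intro a b
    have hb : b ∈ ⨆ β, 𝒜 β := htop ▸ Submodule.mem_top
    refine Submodule.iSup_induction 𝒜 (motive := fun b => F (a ⊗ₜ[k] b) = 0) hb ?_ ?_ ?_
    · intro β b hb
      have e1 := hμ β (Pi.single i 1) b (x i) hb (hx𝒜 i) a 1
      have e2 := hμ β 0 b 1 hb h1mem a (x i)
      have eκ := hκm β (Pi.single i 1) b (x i) hb (hx𝒜 i)
      have : F (a ⊗ₜ[k] b) = LinearMap.mul' k U (TensorProduct.map LinearMap.id κ
          (μ (a ⊗ₜ[k] b) (x i ⊗ₜ[k] (1 : U)) + μ (a ⊗ₜ[k] b) ((1 : U) ⊗ₜ[k] x i))) := by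
        rw [hFapp, hs, map_add]
      rw [this, e1, e2, hc0r, zpow_zero, Units.val_one, one_smul]
      simp only [map_add, map_smul, TensorProduct.map_tmul, LinearMap.mul'_apply,
        LinearMap.id_coe, id_eq, eκ, hκx, mul_one, smul_eq_mul, mul_smul_comm]
      rw [mul_assoc]
      simp
    · simp [TensorProduct.tmul_zero]
    · intro b₁ b₂ h₁ h₂
      rw [TensorProduct.tmul_add, map_add, h₁, h₂, add_zero]
  -- key computation, left multiplication side
  have keyL : ∀ (i : Fin n) (t : U ⊗[k] U),
      LinearMap.mul' k U (TensorProduct.map κ LinearMap.id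
        (μ (x i ⊗ₜ[k] (1 : U) + (1 : U) ⊗ₜ[k] x i) t)) = 0 := by
    intro i
    set s : U ⊗[k] U := x i ⊗ₜ[k] (1 : U) + (1 : U) ⊗ₜ[k] x i with hs
    set G : U ⊗[k] U →ₗ[k] U :=
      LinearMap.mul' k U ∘ₗ TensorProduct.map κ LinearMap.id ∘ₗ μ s with hG
    have hGapp : ∀ t, G t = LinearMap.mul' k U (TensorProduct.map κ LinearMap.id (μ s t)) :=
      fun t => rfl
    suffices h : G = 0 by
      intro t
      have := congrFun (congrArg (fun f : U ⊗[k] U →ₗ[k] U => (f : U ⊗[k] U → U)) h) t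
      simpa [hGapp] using this
    apply TensorProduct.ext'
    intro a b
    have ha : a ∈ ⨆ β, 𝒜 β := htop ▸ Submodule.mem_top
    refine Submodule.iSup_induction 𝒜 (motive := fun a => G (a ⊗ₜ[k] b) = 0) ha ?_ ?_ ?_
    · intro α a ha
      have e1 := hμ (0 : Fin n → ℕ) α (1 : U) a h1mem ha (x i) b
      have e2 := hμ (Pi.single i 1) α (x i) a (hx𝒜 i) ha 1 b
      have eκ := hκm (Pi.single i 1) α (x i) a (hx𝒜 i) ha
      have : G (a ⊗ₜ[k] b) = LinearMap.mul' k U (TensorProduct.map κ LinearMap.id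
          (μ (x i ⊗ₜ[k] (1 : U)) (a ⊗ₜ[k] b) + μ ((1 : U) ⊗ₜ[k] x i) (a ⊗ₜ[k] b))) := by
        rw [hGapp, hs, map_add, LinearMap.add_apply]
      rw [this, e1, e2, hc0l, zpow_zero, Units.val_one, one_smul]
      simp only [map_add, map_smul, TensorProduct.map_tmul, LinearMap.mul'_apply,
        LinearMap.id_coe, id_eq, eκ, hκx, one_mul, smul_eq_mul, smul_mul_assoc]
      simp [mul_assoc]
    · simp [TensorProduct.zero_tmul]
    · intro a₁ a₂ h₁ h₂
      rw [TensorProduct.add_tmul, map_add, h₁, h₂, add_zero]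
  -- spanning sets
  set sR : Set U := {1} ∪ ⋃ i : Fin n, Set.range (fun u : U => u * x i) with hsR
  set sL : Set U := {1} ∪ ⋃ i : Fin n, Set.range (fun u : U => x i * u) with hsL
  have hxR : ∀ i, x i ∈ sR := fun i =>
    Or.inr (Set.mem_iUnion.2 ⟨i, ⟨1, one_mul _⟩⟩)
  have hxL : ∀ i, x i ∈ sL := fun i =>
    Or.inr (Set.mem_iUnion.2 ⟨i, ⟨1, mul_one _⟩⟩)
  have h1R : (1 : U) ∈ sR := Or.inl rfl
  have h1L : (1 : U) ∈ sL := Or.inl rfl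
  -- closure of the spans under multiplication
  have mulR : ∀ a ∈ Submodule.span k sR, ∀ b ∈ Submodule.span k sR,
      a * b ∈ Submodule.span k sR := by
    intro a ha b hb
    induction hb using Submodule.span_induction with
    | zero => rw [mul_zero]; exact zero_mem _
    | add y z _ _ hy hz => rw [mul_add]; exact add_mem hy hz
    | smul c y _ hy => rw [mul_smul_comm]; exact Submodule.smul_mem _ _ hy
    | mem y hy =>
      rcases hy with h | h
      · rw [Set.mem_singleton_iff] at h; rw [h, mul_one]; exact ha
      · rcases Set.mem_iUnion.1 h with ⟨i, v, rfl⟩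
        exact Submodule.subset_span
          (Or.inr (Set.mem_iUnion.2 ⟨i, ⟨a * v, mul_assoc a v (x i)⟩⟩))
  have mulL : ∀ b ∈ Submodule.span k sL, ∀ a ∈ Submodule.span k sL,
      a * b ∈ Submodule.span k sL := by
    intro b hb a ha
    induction ha using Submodule.span_induction with
    | zero => rw [zero_mul]; exact zero_mem _
    | add y z _ _ hy hz => rw [add_mul]; exact add_mem hy hz
    | smul c y _ hy => rw [smul_mul_assoc]; exact Submodule.smul_mem _ _ hy
    | mem y hy =>
      rcases hy with h | h
      · rw [Set.mem_singleton_iff] at h; rw [h, one_mul]; exact hb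
      · rcases Set.mem_iUnion.1 h with ⟨i, v, rfl⟩
        exact Submodule.subset_span
          (Or.inr (Set.mem_iUnion.2 ⟨i, ⟨v * b, (mul_assoc (x i) v b).symm⟩⟩))
  have hspanR : ∀ u : U, u ∈ Submodule.span k sR := by
    intro u
    have hu : u ∈ Algebra.adjoin k (Set.range x) := hgen ▸ trivial
    induction hu using Algebra.adjoin_induction with
    | mem y hy => rcases hy with ⟨i, rfl⟩; exact Submodule.subset_span (hxR i)
    | algebraMap c =>
      rw [Algebra.algebraMap_eq_smul_one]
      exact Submodule.smul_mem _ _ (Submodule.subset_span h1R)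
    | add y z _ _ hy hz => exact add_mem hy hz
    | mul y z _ _ hy hz => exact mulR y hy z hz
  have hspanL : ∀ u : U, u ∈ Submodule.span k sL := by
    intro u
    have hu : u ∈ Algebra.adjoin k (Set.range x) := hgen ▸ trivial
    induction hu using Algebra.adjoin_induction with
    | mem y hy => rcases hy with ⟨i, rfl⟩; exact Submodule.subset_span (hxL i)
    | algebraMap c =>
      rw [Algebra.algebraMap_eq_smul_one]
      exact Submodule.smul_mem _ _ (Submodule.subset_span h1L)
    | add y z _ _ hy hz => exact add_mem hy hz
    | mul y z _ _ hy hz => exact mulL z hz y hy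
  intro u
  constructor
  · induction hspanR u using Submodule.span_induction with
    | zero => simp
    | add y z _ _ hy hz => simp only [map_add, hy, hz]
    | smul c y _ hy =>
      simp only [map_smul, hy, smul_eq_mul, map_mul]
      rw [← Algebra.smul_def]
    | mem y hy =>
      rcases hy with h | h
      · rw [Set.mem_singleton_iff] at h; subst h
        rw [hφ1]
        simp [hκ1]
      · rcases Set.mem_iUnion.1 h with ⟨i, v, rfl⟩
        rw [hφm, hφx i, keyR i (φ v), map_mul, hε i, mul_zero, map_zero]
  · induction hspanL u using Submodule.span_induction with
    | zero => simp
    | add y z _ _ hy hz => simp only [map_add, hy, hz]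
    | smul c y _ hy =>
      simp only [map_smul, hy, smul_eq_mul, map_mul]
      rw [← Algebra.smul_def]
    | mem y hy =>
      rcases hy with h | h
      · rw [Set.mem_singleton_iff] at h; subst h
        rw [hφ1]
        simp [hκ1]
      · rcases Set.mem_iUnion.1 h with ⟨i, v, rfl⟩
        rw [hφm, hφx i, keyL i (φ v), map_mul, hε i, zero_mul, map_zero]
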